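/- Let P and W be 2n×2n real antisymmetric matrices (Pᵗ = −P, Wᵗ = −W) with W invertible, and set N = P·W. Then for every real number λ the dimension of the kernel of N − λ·1₂ₙ is even; consequently N has at most n distinct real eigenvalues. -/

import Mathlib

open Matrix Module Submodule LinearMap

section AltParity

variable {V : Type*} [AddCommGroup V] [Module ℝ V]

/-- The radical of an alternating bilinear form has the same parity as the dimension. -/
lemma alt_parity (m : ℕ) : ∀ (V : Type) [AddCommGroup V] [Module ℝ V]
    [FiniteDimensional ℝ V] (B : LinearMap.BilinForm ℝ V), B.IsAlt →
    Module.finrank ℝ V = m →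
    Even (Module.finrank ℝ V - Module.finrank ℝ (LinearMap.ker B)) := by
  induction m using Nat.strong_induction_on with
  | _ m IH =>
    intro V _ _ _ B hB hm
    by_cases hB0 : B = 0
    · subst hB0
      rw [LinearMap.ker_zero]
      simp
    · -- pick x, y with B x y ≠ 0
      have : ∃ x y, B x y ≠ 0 := by
        by_contra h
        push_neg at h
        exact hB0 (by ext x y; simp [h])
      obtain ⟨x, y, hxy⟩ := this
      have hrefl : B.IsRefl := hB.isRefl
      -- U = span {x, y}
      set U : Submodule ℝ V := Submodule.span ℝ {x, y} with hU
      have hxU : x ∈ U := Submodule.subset_span (by simp)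
      have hyU : y ∈ U := Submodule.subset_span (by simp [Set.mem_insert_iff])
      -- x, y linearly independent
      have hxx : B x x = 0 := hB x
      have hyx : B y x = -B x y := by
        have := hB.neg_eq x y; linarith
      have hind : LinearIndependent ℝ ![x, y] := by
        rw [LinearIndependent.pair_iff]
        intro a b hab
        have h1 : B (a • x + b • y) y = 0 := by rw [hab]; simp
        have h2 : B (a • x + b • y) x = 0 := by rw [hab]; simp
        simp only [map_add, _root_.map_smul, LinearMap.add_apply, LinearMap.smul_apply,
          smul_eq_mul] at h1 h2
        rw [hxx] at h2
        rw [hB y] at h1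
        have ha : a = 0 := by
          rcases mul_eq_zero.mp (by linarith : a * B x y = 0) with h | h
          · exact h
          · exact absurd h hxy
        have hb : b = 0 := by
          rw [hyx] at h2
          rcases mul_eq_zero.mp (by linarith : b * -B x y = 0) with h | h
          · exact h
          · exact absurd h (by simpa using hxy)
        exact ⟨ha, hb⟩
      have hUrank : Module.finrank ℝ U = 2 := by
        have h1 := finrank_span_eq_card hind
        have h2 : Set.range ![x, y] = {x, y} := by
          simp [Matrix.range_cons, Matrix.range_empty, Set.pair_comm]
        rw [h2] at h1
        simpa using h1
      -- restriction of B to U is nondegenerate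
      have hnd : (B.restrict U).Nondegenerate := by
        refine (LinearMap.IsRefl.nondegenerate_iff_separatingLeft (B := B.restrict U) (fun a b h => hrefl a b h)).mpr ?_
        intro u hu
        obtain ⟨u, huU⟩ := u
        have h1 := hu ⟨x, hxU⟩
        have h2 := hu ⟨y, hyU⟩
        simp only [LinearMap.BilinForm.restrict_apply, LinearMap.domRestrict_apply] at h1 h2
        obtain ⟨a, b, rfl⟩ := Submodule.mem_span_pair.mp huU
        simp only [map_add, _root_.map_smul, LinearMap.add_apply, LinearMap.smul_apply,
          smul_eq_mul] at h1 h2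
        rw [hxx] at h1
        rw [hB y] at h2
        have ha : a = 0 := by
          rcases mul_eq_zero.mp (by linarith : a * B x y = 0) with h | h
          · exact h
          · exact absurd h hxy
        have hb : b = 0 := by
          rw [hyx] at h1
          rcases mul_eq_zero.mp (by linarith : b * -B x y = 0) with h | h
          · exact h
          · exact absurd h (by simpa using hxy)
        ext
        simp [ha, hb]
      have hcompl : IsCompl U (B.orthogonal U) :=
        LinearMap.BilinForm.isCompl_orthogonal_of_restrict_nondegenerate hrefl hnd
      set Wo : Submodule ℝ V := B.orthogonal U with hWo
      have hdim : Module.finrank ℝ U + Module.finrank ℝ Wo = Module.finrank ℝ V :=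
        Submodule.finrank_add_eq_of_isCompl hcompl
      -- the restricted form on Wo
      set B' : LinearMap.BilinForm ℝ Wo := B.restrict Wo with hB'
      have hB'alt : B'.IsAlt := fun w => hB w
      -- kernels agree
      have hker : LinearMap.ker B' = (LinearMap.ker B).comap Wo.subtype := by
        ext ⟨v, hv⟩
        simp only [LinearMap.mem_ker, Submodule.mem_comap, Submodule.coe_subtype]
        constructor
        · intro h
          refine LinearMap.ext fun w => ?_
          -- every w is u + w' with u ∈ U, w' ∈ Wo
          have hw : w ∈ U ⊔ Wo := by rw [hcompl.sup_eq_top]; trivial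
          obtain ⟨u, hu, w', hw', rfl⟩ := Submodule.mem_sup.mp hw
          have h1 : B v u = 0 := hrefl u v (hv u hu)
          have h2 : B v w' = 0 := by
            have h2' : B' ⟨v, hv⟩ ⟨w', hw'⟩ = 0 := by rw [h]; simp
            simpa [hB', LinearMap.BilinForm.restrict_apply] using h2'
          simp [map_add, h1, h2]
        · intro h
          refine LinearMap.ext fun w' => ?_
          obtain ⟨w, hw⟩ := w'
          have : B v w = 0 := by rw [h]; simp
          simpa [hB', LinearMap.BilinForm.restrict_apply] using this
      have hkerle : LinearMap.ker B ≤ Wo := by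
        intro v hv
        intro u _
        exact hrefl v u (by rw [LinearMap.mem_ker.mp hv]; simp)
      have hkerdim : Module.finrank ℝ (LinearMap.ker B')
          = Module.finrank ℝ (LinearMap.ker B) := by
        rw [hker]
        exact (Submodule.comapSubtypeEquivOfLe hkerle).finrank_eq
      -- apply induction hypothesis on Wo
      have hWolt : Module.finrank ℝ Wo < m := by omega
      -- transfer Wo to a type in `Type` via its own structure: use IH directly
      have hIH := IH (Module.finrank ℝ Wo) hWolt (Fin (Module.finrank ℝ Wo) → ℝ)
      -- instead of transporting, redo via an equiv: choose an equiv Wo ≃ₗ Fin d → ℝ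
      obtain ⟨e⟩ : Nonempty (Wo ≃ₗ[ℝ] (Fin (Module.finrank ℝ Wo) → ℝ)) :=
        ⟨LinearEquiv.ofFinrankEq _ _ (by simp)⟩
      -- transported form
      set B'' : LinearMap.BilinForm ℝ (Fin (Module.finrank ℝ Wo) → ℝ) :=
        (B'.compl₁₂ (e.symm : _ →ₗ[ℝ] _) (e.symm : _ →ₗ[ℝ] _)) with hB''
      have hB''alt : B''.IsAlt := fun z => hB'alt (e.symm z)
      have hkerB'' : LinearMap.ker B'' = (LinearMap.ker B').map (e : _ →ₗ[ℝ] _) := by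
        ext z
        simp only [LinearMap.mem_ker, Submodule.mem_map]
        constructor
        · intro h
          refine ⟨e.symm z, ?_, by simp⟩
          refine LinearMap.ext fun w => ?_
          have h2 : B'' z (e w) = 0 := by rw [h]; simp
          simpa [hB''] using h2
        · rintro ⟨v, hv, rfl⟩
          refine LinearMap.ext fun w => ?_
          have h2 : B' v (e.symm w) = 0 := by rw [hv]; simp
          simpa [hB''] using h2
      have hkerB''dim : Module.finrank ℝ (LinearMap.ker B'')
          = Module.finrank ℝ (LinearMap.ker B') := by
        rw [hkerB'']
        exact (Submodule.equivMapOfInjective _ e.injective _).symm.finrank_eq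
      have h2 := hIH B'' hB''alt (by simp)
      have hle' : Module.finrank ℝ (LinearMap.ker B') ≤ Module.finrank ℝ Wo :=
        Submodule.finrank_le _
      obtain ⟨k, hk⟩ := h2
      refine ⟨k + 1, ?_⟩
      have hfr : Module.finrank ℝ (Fin (Module.finrank ℝ Wo) → ℝ) = Module.finrank ℝ Wo := by
        simp
      rw [hfr, hkerB''dim, hkerdim] at hk
      have hle : Module.finrank ℝ (LinearMap.ker B) ≤ Module.finrank ℝ Wo := by
        rw [← hkerdim]; exact hle'
      omega

end AltParity

/-- The rank of a real antisymmetric matrix is even. -/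
lemma skew_rank_even {m : ℕ} (A : Matrix (Fin m) (Fin m) ℝ) (hA : Aᵀ = -A) :
    Even A.rank := by
  set B : LinearMap.BilinForm ℝ (Fin m → ℝ) := Matrix.toBilin' A with hBdef
  have hAlt : B.IsAlt := by
    intro v
    have h1 : B v v = v ⬝ᵥ A.mulVec v := Matrix.toBilin'_apply' A v v
    have h2 : v ⬝ᵥ A.mulVec v = (Aᵀ.mulVec v) ⬝ᵥ v := by
      rw [Matrix.dotProduct_mulVec, ← Matrix.vecMul_transpose, Matrix.transpose_transpose]
    rw [hA] at h2
    have h3 : ((-A).mulVec v) ⬝ᵥ v = -(v ⬝ᵥ A.mulVec v) := by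
      rw [Matrix.neg_mulVec, neg_dotProduct, dotProduct_comm]
    have : v ⬝ᵥ A.mulVec v = 0 := by rw [h2, h3] at *; linarith [h2]
    rw [h1, this]
  have hker : LinearMap.ker B = LinearMap.ker A.mulVecLin := by
    ext v
    simp only [LinearMap.mem_ker]
    constructor
    · intro h
      have hall : ∀ w, v ⬝ᵥ A.mulVec w = 0 := by
        intro w
        have h2 : B v w = 0 := by rw [h]; simp
        simpa [hBdef, Matrix.toBilin'_apply'] using h2
      -- v ⬝ᵥ A w = (Aᵀ v) ⬝ᵥ w = (-(A v)) ⬝ᵥ w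
      have hAv : ∀ w, (A.mulVec v) ⬝ᵥ w = 0 := by
        intro w
        have h1 := hall w
        rw [Matrix.dotProduct_mulVec, ← Matrix.mulVec_transpose, hA, Matrix.neg_mulVec,
          neg_dotProduct] at h1
        linarith
      ext i
      have := hAv (Pi.single i 1)
      simpa [dotProduct_single] using this
    · intro h
      refine LinearMap.ext fun w => ?_
      have hv : A *ᵥ v = 0 := h
      have hvm : v ᵥ* A = 0 := by
        have h2 : Aᵀ *ᵥ v = -(A *ᵥ v) := by rw [hA, Matrix.neg_mulVec]
        rw [← Matrix.mulVec_transpose, h2, hv, neg_zero]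
      show Matrix.toBilin' A v w = 0
      rw [Matrix.toBilin'_apply', Matrix.dotProduct_mulVec, hvm, zero_dotProduct]
  have hparity := alt_parity m (Fin m → ℝ) B hAlt (by simp)
  have hrn : A.rank + Module.finrank ℝ (LinearMap.ker A.mulVecLin) = m := by
    have := LinearMap.finrank_range_add_finrank_ker A.mulVecLin
    simpa [Matrix.rank] using this
  have hfr : Module.finrank ℝ (Fin m → ℝ) = m := by simp
  rw [hfr, hker] at hparity
  obtain ⟨k, hk⟩ := hparity
  exact ⟨k, by omega⟩

/-- Independent families of submodules: sum of finranks bounded by total dimension. -/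
lemma sum_finrank_le_of_iSupIndep {K V : Type*} [Field K] [AddCommGroup V] [Module K V]
    [FiniteDimensional K V] {ι : Type*} {p : ι → Submodule K V} (hp : iSupIndep p)
    [DecidableEq ι] (s : Finset ι) : ∑ i ∈ s, Module.finrank K (p i) ≤ Module.finrank K V := by
  suffices h : ∑ i ∈ s, Module.finrank K (p i)
      ≤ Module.finrank K ((⨆ i ∈ s, p i : Submodule K V)) by
    exact h.trans (Submodule.finrank_le _)
  induction s using Finset.cons_induction with
  | empty => simp
  | cons a s ha ih =>
    rw [Finset.sum_cons]
    have hsup : (⨆ i ∈ Finset.cons a s ha, p i : Submodule K V)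
        = p a ⊔ ⨆ i ∈ s, p i := by
      rw [Finset.cons_eq_insert, Finset.iSup_insert]
    rw [hsup]
    have hdisj : Disjoint (p a) (⨆ i ∈ s, p i) := by
      refine (hp a).mono_right ?_
      refine iSup_le fun i => iSup_le fun hi => ?_
      exact le_iSup_of_le i (le_iSup_of_le (by rintro rfl; exact ha hi) le_rfl)
    have := Submodule.finrank_sup_add_finrank_inf_eq (p a) (⨆ i ∈ s, p i)
    rw [hdisj.eq_bot] at this
    simp only [finrank_bot, add_zero] at this
    omega

/-- Pointwise linear algebra of Section 2.2: for `N = P·W` with `P`, `W` real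
antisymmetric `2n×2n` matrices and `W` invertible, each real eigenspace of `N`
is even-dimensional, hence `N` has at most `n` distinct real eigenvalues. -/
theorem stmt_14 (n : ℕ) (P W : Matrix (Fin (2 * n)) (Fin (2 * n)) ℝ)
    (hP : Pᵀ = -P) (hW : Wᵀ = -W) (hWinv : IsUnit W) :
    (∀ t : ℝ,
      Even (Module.finrank ℝ
        (LinearMap.ker (Matrix.toLin' (P * W - t • (1 : Matrix (Fin (2 * n)) (Fin (2 * n)) ℝ)))))) ∧
    (∀ s : Finset ℝ,
      (∀ t ∈ s,
        LinearMap.ker (Matrix.toLin' (P * W - t • (1 : Matrix (Fin (2 * n)) (Fin (2 * n)) ℝ))) ≠ ⊥) →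
      s.card ≤ n) := by
  have hdet : IsUnit W.det := (Matrix.isUnit_iff_isUnit_det W).mp hWinv
  -- key: PW - t•1 = (P - t•W⁻¹) * W with P - t•W⁻¹ skew
  have key : ∀ t : ℝ, Even (Module.finrank ℝ
      (LinearMap.ker (Matrix.toLin' (P * W - t • (1 : Matrix (Fin (2 * n)) (Fin (2 * n)) ℝ))))) := by
    intro t
    set A : Matrix (Fin (2 * n)) (Fin (2 * n)) ℝ := P - t • W⁻¹ with hAdef
    have hWneg : (-W)⁻¹ = -W⁻¹ := Matrix.inv_eq_right_inv
      (by rw [Matrix.neg_mul, Matrix.mul_neg, neg_neg, Matrix.mul_nonsing_inv W hdet])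
    have hAskew : Aᵀ = -A := by
      rw [hAdef, Matrix.transpose_sub, hP, Matrix.transpose_smul,
        Matrix.transpose_nonsing_inv, hW, hWneg]
      rw [smul_neg, sub_neg_eq_add, neg_sub]
      abel
    have hfact : P * W - t • (1 : Matrix (Fin (2 * n)) (Fin (2 * n)) ℝ) = A * W := by
      rw [hAdef, Matrix.sub_mul, Matrix.smul_mul, Matrix.nonsing_inv_mul W hdet]
    have hrank : (A * W).rank = A.rank := Matrix.rank_mul_eq_left_of_isUnit_det W A hdet
    have hrn : (A * W).rank + Module.finrank ℝ (LinearMap.ker (A * W).mulVecLin) = 2 * n := by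
      have := LinearMap.finrank_range_add_finrank_ker (A * W).mulVecLin
      simpa [Matrix.rank] using this
    have hkereq : LinearMap.ker (Matrix.toLin' (P * W - t • (1 : Matrix (Fin (2 * n)) (Fin (2 * n)) ℝ)))
        = LinearMap.ker (A * W).mulVecLin := by
      rw [hfact, Matrix.toLin'_apply']
    rw [hkereq]
    obtain ⟨k, hk⟩ := skew_rank_even A hAskew
    have hAle : A.rank ≤ 2 * n := by
      have := A.rank_le_card_width
      simpa using this
    exact ⟨n - k, by omega⟩
  refine ⟨key, ?_⟩
  intro s hs
  -- kernels are eigenspaces of toLin' (P * W)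
  set N := Matrix.toLin' (P * W) with hN
  have heig : ∀ t : ℝ,
      LinearMap.ker (Matrix.toLin' (P * W - t • (1 : Matrix (Fin (2 * n)) (Fin (2 * n)) ℝ)))
      = Module.End.eigenspace N t := by
    intro t
    ext v
    rw [LinearMap.mem_ker, Module.End.mem_eigenspace_iff]
    rw [Matrix.toLin'_apply', Matrix.mulVecLin_apply, Matrix.sub_mulVec, Matrix.smul_mulVec,
      Matrix.one_mulVec, sub_eq_zero, hN, Matrix.toLin'_apply]
  have hindep : iSupIndep (Module.End.eigenspace N) := Module.End.eigenspaces_iSupIndep N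
  have hsum := sum_finrank_le_of_iSupIndep hindep s
  have hfr : Module.finrank ℝ (Fin (2 * n) → ℝ) = 2 * n := by simp
  rw [hfr] at hsum
  have hlb : ∀ t ∈ s, 2 ≤ Module.finrank ℝ (Module.End.eigenspace N t) := by
    intro t ht
    have hne := hs t ht
    rw [heig t] at hne
    have hpos : 0 < Module.finrank ℝ (Module.End.eigenspace N t) := by
      rw [Module.finrank_pos_iff]
      exact Submodule.nontrivial_iff_ne_bot.mpr hne
    have hev := key t
    rw [heig t] at hev
    obtain ⟨k, hk⟩ := hev
    omega
  have h2card : 2 * s.card ≤ ∑ t ∈ s, Module.finrank ℝ (Module.End.eigenspace N t) := by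
    calc 2 * s.card = ∑ _t ∈ s, 2 := by rw [Finset.sum_const]; ring
    _ ≤ _ := Finset.sum_le_sum hlb
  omega
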